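/- Let λ, ω ∈ ℝ with ω > 0. Let a, b : ℝ → ℂ be differentiable with b(t) ≠ 0 and Re a(t) > 0 for all t, and define u(t,x) = b(t) e^{−a(t)x²/2} for (t,x) ∈ ℝ×ℝ. Then u is a classical solution of the one-dimensional equation i∂ₜu + (1/2)∂ₓ²u = −ω²(x²/2)u + λ u ln(|u|²) if and only if a and b satisfy the ODE system i b′(t) = (1/2)a(t)b(t) + λ b(t) ln|b(t)|² and i a′(t) = a(t)² + 2λ Re a(t) + ω² for all t ∈ ℝ. -/

import Mathlib

/-- The logarithmic nonlinearity `z ↦ z ln|z|²`, vanishing at `z = 0`. -/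
noncomputable def logNL (z : ℂ) : ℂ := z * ((Real.log (‖z‖ ^ 2) : ℝ) : ℂ)

/-- A Gaussian ansatz `u(t,x) = b(t) e^{−a(t)x²/2}` (with `a`, `b` differentiable,
`b` nonvanishing and `Re a > 0`) is a classical solution of the one-dimensional
logarithmic Schrödinger equation with repulsive harmonic potential
`i∂ₜu + (1/2)∂ₓ²u = −ω²(x²/2)u + λ u ln(|u|²)` if and only if
`i b′ = (1/2)ab + λ b ln|b|²` and `i a′ = a² + 2λ Re a + ω²`. -/
theorem gaussian_ansatz_iff_ode_system
    (lam ω : ℝ) (hω : 0 < ω) (a b : ℝ → ℂ)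
    (ha : Differentiable ℝ a) (hb : Differentiable ℝ b)
    (hbne : ∀ t, b t ≠ 0) (hare : ∀ t, 0 < (a t).re)
    (u : ℝ → ℝ → ℂ)
    (hu : ∀ t x, u t x = b t * Complex.exp (-(a t) * (x : ℂ) ^ 2 / 2)) :
    (∀ t x, Complex.I * deriv (fun s => u s x) t
        + (1 / 2 : ℂ) * deriv (deriv (u t)) x
      = -((ω : ℂ) ^ 2) * ((x ^ 2 / 2 : ℝ) : ℂ) * u t x + (lam : ℂ) * logNL (u t x))
    ↔ (∀ t, Complex.I * deriv b t
          = (1 / 2 : ℂ) * a t * b t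
            + (lam : ℂ) * b t * ((Real.log (‖b t‖ ^ 2) : ℝ) : ℂ)
        ∧ Complex.I * deriv a t
          = (a t) ^ 2 + 2 * (lam : ℂ) * (((a t).re : ℝ) : ℂ) + (ω : ℂ) ^ 2) := by
  -- first spatial derivative of `u t`
  have hux : ∀ (t : ℝ) (y : ℝ), HasDerivAt (u t)
      (b t * Complex.exp (-(a t) * (y:ℂ)^2/2) * (-(a t) * (y:ℂ))) y := by
    intro t y
    have hid : HasDerivAt (fun z : ℝ => (z:ℂ)) 1 y := by
      simpa using (hasDerivAt_id y).ofReal_comp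
    have hsq : HasDerivAt (fun z : ℝ => ((z:ℂ))^2) (2*(y:ℂ)) y := by
      simpa [pow_two, two_mul] using hid.fun_mul hid
    have hin : HasDerivAt (fun z : ℝ => -(a t) * (z:ℂ)^2/2) (-(a t)*(y:ℂ)) y := by
      have h := (hsq.const_mul (-(a t))).div_const 2
      convert h using 1
      rfl
      ring
    have h2 := hin.cexp.const_mul (b t)
    have hfun : (u t) = fun z : ℝ => b t * Complex.exp (-(a t)*(z:ℂ)^2/2) :=
      funext fun z => hu t z
    rw [hfun]
    convert h2 using 1
    rfl
    ring
  have key : ∀ (t x : ℝ),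
      (Complex.I * deriv (fun s => u s x) t + (1 / 2 : ℂ) * deriv (deriv (u t)) x
        = -((ω : ℂ) ^ 2) * ((x ^ 2 / 2 : ℝ) : ℂ) * u t x + (lam : ℂ) * logNL (u t x))
      ↔ (Complex.I * (deriv b t - b t * deriv a t * (x:ℂ)^2/2)
          + (1/2:ℂ) * (b t * ((a t)^2 * (x:ℂ)^2 - a t))
        = -((ω:ℂ)^2) * ((x:ℂ)^2/2) * b t
          + (lam:ℂ) * b t * (((Real.log (‖b t‖^2) : ℝ):ℂ)
              - ((a t).re : ℂ) * (x:ℂ)^2)) := by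
    intro t x
    have hE : Complex.exp (-(a t) * (x:ℂ)^2/2) ≠ 0 := Complex.exp_ne_zero _
    -- time derivative
    have hin : HasDerivAt (fun s => -(a s) * (x:ℂ)^2 / 2) (-(deriv a t) * (x:ℂ)^2 / 2) t :=
      ((ha t).hasDerivAt.neg.mul_const _).div_const 2
    have hdt : deriv (fun s => u s x) t
        = deriv b t * Complex.exp (-(a t)*(x:ℂ)^2/2)
          + b t * (Complex.exp (-(a t)*(x:ℂ)^2/2) * (-(deriv a t)*(x:ℂ)^2/2)) := by
      have hfun : (fun s => u s x) = fun s => b s * Complex.exp (-(a s)*(x:ℂ)^2/2) :=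
        funext fun s => hu s x
      rw [hfun]
      exact ((hb t).hasDerivAt.mul hin.cexp).deriv
    -- second spatial derivative
    have hid : HasDerivAt (fun z : ℝ => (z:ℂ)) 1 x := by
      simpa using (hasDerivAt_id x).ofReal_comp
    have hsq : HasDerivAt (fun z : ℝ => ((z:ℂ))^2) (2*(x:ℂ)) x := by
      simpa [pow_two, two_mul] using hid.fun_mul hid
    have hinx : HasDerivAt (fun z : ℝ => -(a t) * (z:ℂ)^2/2) (-(a t)*(x:ℂ)) x := by
      have h := (hsq.const_mul (-(a t))).div_const 2
      convert h using 1
      rfl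
      ring
    have hlin : HasDerivAt (fun z : ℝ => -(a t) * (z:ℂ)) (-(a t)) x := by
      have h := hid.const_mul (-(a t))
      convert h using 1
      rfl
      ring
    have hd1fun : deriv (u t) = fun y : ℝ =>
        (b t * Complex.exp (-(a t)*(y:ℂ)^2/2)) * (-(a t) * (y:ℂ)) :=
      funext fun y => (hux t y).deriv
    have hdd : deriv (deriv (u t)) x
        = (b t * (Complex.exp (-(a t)*(x:ℂ)^2/2) * (-(a t)*(x:ℂ)))) * (-(a t)*(x:ℂ))
          + (b t * Complex.exp (-(a t)*(x:ℂ)^2/2)) * (-(a t)) := by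
      rw [hd1fun]
      exact ((hinx.cexp.const_mul (b t)).mul hlin).deriv
    -- logarithm of the Gaussian
    have hlog : logNL (u t x)
        = b t * Complex.exp (-(a t)*(x:ℂ)^2/2)
          * (((Real.log (‖b t‖^2) : ℝ):ℂ) - ((a t).re : ℂ) * (x:ℂ)^2) := by
      have hre : (-(a t) * (x:ℂ)^2/2).re = -((x^2)/2) * (a t).re := by
        have : -(a t) * (x:ℂ)^2/2 = ((-(x^2)/2 : ℝ) : ℂ) * a t := by
          push_cast; ring
        rw [this, Complex.re_ofReal_mul]
        ring
      have habs : ‖u t x‖ ^ 2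
          = ‖b t‖^2 * Real.exp (-((a t).re) * x^2) := by
        rw [hu, norm_mul, Complex.norm_exp, hre, mul_pow, sq (Real.exp _), ← Real.exp_add]
        ring_nf
      have hbabs : ‖b t‖^2 ≠ 0 := by
        simpa using hbne t
      have hlogeq : Real.log (‖u t x‖ ^ 2)
          = Real.log (‖b t‖^2) + (-((a t).re) * x^2) := by
        rw [habs, Real.log_mul hbabs (Real.exp_ne_zero _), Real.log_exp]
      rw [logNL, hlogeq, hu]
      push_cast
      ring
    rw [hdt, hdd, hlog, hu t x]
    push_cast
    constructor
    · intro h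
      apply mul_right_cancel₀ hE
      linear_combination h
    · intro h
      linear_combination Complex.exp (-(a t)*(x:ℂ)^2/2) * h
  constructor
  · intro h t
    have P0 := (key t 0).mp (h t 0)
    have P1 := (key t 1).mp (h t 1)
    push_cast at P0 P1
    refine ⟨by linear_combination P0, ?_⟩
    have hmain : b t * (Complex.I * deriv a t)
        = b t * ((a t) ^ 2 + 2 * (lam : ℂ) * (((a t).re : ℝ) : ℂ) + (ω : ℂ) ^ 2) := by
      linear_combination 2*P0 - 2*P1
    exact mul_left_cancel₀ (hbne t) hmain
  · intro h t x
    rw [key t x]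
    linear_combination (h t).1 + (-(x:ℂ)^2/2 * b t) * (h t).2
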